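/- Every countable cofiltered category admits a coinitial (initial/cofinal in the appropriate sense) functor from ω^op, the opposite of the poset ℕ; equivalently, every countable cofiltered category has a coinitial sequence. -/

import Mathlib

open CategoryTheory

namespace Stmt10Aux

variable (I : Type) [SmallCategory I] [Countable I]
    [∀ X Y : I, Countable (X ⟶ Y)] [IsCofiltered I]

attribute [local instance] IsCofiltered.nonempty

/-- A surjective enumeration of the objects. -/
noncomputable def o : ℕ → I := (exists_surjective_nat I).choose

lemma o_surj : Function.Surjective (o I) := (exists_surjective_nat I).choose_spec

variable {I}

/-- A surjective enumeration (valued in `Option`) of parallel pairs of morphisms. -/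
noncomputable def e (x d : I) : ℕ → Option ((x ⟶ d) × (x ⟶ d)) :=
  (exists_surjective_nat (Option ((x ⟶ d) × (x ⟶ d)))).choose

lemma e_surj (x d : I) (p : (x ⟶ d) × (x ⟶ d)) : ∃ r, e x d r = some p :=
  (exists_surjective_nat (Option ((x ⟶ d) × (x ⟶ d)))).choose_spec (some p)

variable (I)

/-- State of the construction at stage `n`: the object, a morphism to `o n`,
and (for `k ≤ n`) the earlier objects together with transition maps. -/
structure St (n : ℕ) where
  x : I
  p : x ⟶ o I n
  h : ℕ → Σ y : I, (x ⟶ y)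

variable {I}

/-- Choice of an object equalizing a (possibly absent) parallel pair after `t`. -/
noncomputable def wObj {x y d : I} (t : x ⟶ y) :
    Option ((y ⟶ d) × (y ⟶ d)) → Σ' (W : I), (W ⟶ x)
  | some (u, v) => ⟨IsCofiltered.eq (t ≫ u) (t ≫ v), IsCofiltered.eqHom _ _⟩
  | none => ⟨x, 𝟙 x⟩

/-- The equalizing object used at step `m`. -/
noncomputable def Wp (m : ℕ) (s : St I m) : Σ' (W : I), (W ⟶ s.x) :=
  wObj (s.h m.unpair.1).2 (e (s.h m.unpair.1).1 (o I m.unpair.2.unpair.1) m.unpair.2.unpair.2)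

/-- One step of the construction. -/
noncomputable def step (m : ℕ) (s : St I m) : St I (m + 1) where
  x := IsCofiltered.min (Wp m s).1 (o I (m + 1))
  p := IsCofiltered.minToRight _ _
  h := fun j =>
    if j = m + 1 then ⟨IsCofiltered.min (Wp m s).1 (o I (m + 1)), 𝟙 _⟩
    else ⟨(s.h j).1,
      (IsCofiltered.minToLeft (Wp m s).1 (o I (m + 1)) ≫ (Wp m s).2) ≫ (s.h j).2⟩

/-- The transition map of one step. -/
noncomputable def stepQ (m : ℕ) (s : St I m) : (step m s).x ⟶ s.x :=
  IsCofiltered.minToLeft (Wp m s).1 (o I (m + 1)) ≫ (Wp m s).2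

variable (I)

/-- The whole sequence of states. -/
noncomputable def S : ∀ n : ℕ, St I n
  | 0 => ⟨o I 0, 𝟙 _, fun _ => ⟨o I 0, 𝟙 _⟩⟩
  | n + 1 => step n (S n)

/-- The underlying sequence of objects. -/
noncomputable def obj (n : ℕ) : I := (S I n).x

variable {I}

lemma step_h_ne (m : ℕ) (s : St I m) (j : ℕ) (hj : j ≠ m + 1) :
    (step m s).h j = ⟨(s.h j).1, stepQ m s ≫ (s.h j).2⟩ := by
  simp only [step, stepQ]
  rw [if_neg hj]

lemma inv_self : ∀ n : ℕ, (S I n).h n = ⟨(S I n).x, 𝟙 _⟩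
  | 0 => rfl
  | n + 1 => by
    show (step n (S I n)).h (n + 1) = _
    dsimp only [step]
    rw [if_pos rfl]
    rfl

lemma h_m (m : ℕ) : (S I (m + 1)).h m = ⟨obj I m, stepQ m (S I m)⟩ := by
  show (step m (S I m)).h m = _
  rw [step_h_ne m (S I m) m (by omega), inv_self]
  simp [obj]
  rfl

lemma hfst (m : ℕ) : ((S I (m + 1)).h m).1 = obj I m := by rw [h_m]

lemma sigma_snd {x c : I} {s : Σ y : I, (x ⟶ y)} {γ : x ⟶ c}
    (hs : s = ⟨c, γ⟩) (hc : s.1 = c) : s.2 ≫ eqToHom hc = γ := by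
  subst hs; simp

/-- The transition maps of the sequence. -/
noncomputable def f (I : Type) [SmallCategory I] [Countable I]
    [∀ X Y : I, Countable (X ⟶ Y)] [IsCofiltered I] (n : ℕ) :
    obj I (n + 1) ⟶ obj I n :=
  ((S I (n + 1)).h n).2 ≫ eqToHom (hfst n)

lemma f_eq (n : ℕ) : f I n = stepQ n (S I n) := sigma_snd (h_m n) (hfst n)

/-- The sequential functor. -/
noncomputable def F (I : Type) [SmallCategory I] [Countable I]
    [∀ X Y : I, Countable (X ⟶ Y)] [IsCofiltered I] : ℕᵒᵖ ⥤ I :=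
  Functor.ofOpSequence (f I)

lemma F_map_succ (n : ℕ) :
    (F I).map (homOfLE (Nat.le_add_right n 1)).op = f I n :=
  Functor.ofOpSequence_map_homOfLE_succ (f I) n

lemma F_map_step {k m : ℕ} (h : k ≤ m) :
    (F I).map (homOfLE (h.trans (Nat.le_add_right m 1))).op
      = f I m ≫ (F I).map (homOfLE h).op := by
  rw [← F_map_succ]
  exact (F I).map_comp (homOfLE (Nat.le_add_right m 1)).op (homOfLE h).op

/-- The main invariant: the stored maps are the transition maps of `F`. -/
lemma inv : ∀ (m k : ℕ) (hk : k ≤ m),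
    (S I m).h k = ⟨obj I k, (F I).map (homOfLE hk).op⟩
  | 0, k, hk => by
    obtain rfl : k = 0 := by omega
    rw [show (homOfLE hk).op = 𝟙 (Opposite.op 0) from rfl, CategoryTheory.Functor.map_id]
    rfl
  | m + 1, k, hk => by
    rcases Nat.lt_or_ge k (m + 1) with hlt | hge
    · have hk' : k ≤ m := by omega
      show (step m (S I m)).h k = _
      rw [step_h_ne m (S I m) k (by omega), inv m k hk']
      have h2 : (F I).map (homOfLE hk).op
          = f I m ≫ (F I).map (homOfLE hk').op := F_map_step hk'
      rw [h2, ← f_eq]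
      rfl
    · obtain rfl : k = m + 1 := by omega
      rw [inv_self, show (homOfLE hk).op = 𝟙 (Opposite.op (m + 1)) from rfl,
        CategoryTheory.Functor.map_id]
      rfl

lemma wObj_cond {x y d : I} (t : x ⟶ y) (opt : Option ((y ⟶ d) × (y ⟶ d)))
    (u v : y ⟶ d) (h : opt = some (u, v)) :
    (wObj t opt).2 ≫ t ≫ u = (wObj t opt).2 ≫ t ≫ v := by
  subst h
  simp only [wObj]
  simpa using IsCofiltered.eq_condition (t ≫ u) (t ≫ v)

/-- The key equalizing property of each step. -/
lemma stepQ_cond (m : ℕ) (s : St I m)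
    (u v : (s.h m.unpair.1).1 ⟶ o I m.unpair.2.unpair.1)
    (he : e (s.h m.unpair.1).1 (o I m.unpair.2.unpair.1) m.unpair.2.unpair.2 = some (u, v)) :
    stepQ m s ≫ (s.h m.unpair.1).2 ≫ u = stepQ m s ≫ (s.h m.unpair.1).2 ≫ v := by
  unfold stepQ Wp
  erw [Category.assoc, Category.assoc]
  rw [wObj_cond _ _ _ _ he]

end Stmt10Aux

open Stmt10Aux in
/-- Every countable cofiltered category admits a coinitial (initial) functor
from `ω^op`, the opposite of the poset `ℕ`; i.e. every countable cofiltered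
category has a coinitial sequence. -/
theorem stmt_10 (I : Type) [SmallCategory I] [Countable I]
    [∀ X Y : I, Countable (X ⟶ Y)] [IsCofiltered I] :
    ∃ F : ℕᵒᵖ ⥤ I, F.Initial := by
  refine ⟨F I, ?_⟩
  haveI : IsCofilteredOrEmpty ℕᵒᵖ := inferInstance
  rw [Functor.initial_iff_of_isCofiltered (F := F I)]
  constructor
  · intro d
    obtain ⟨a, rfl⟩ := o_surj I d
    exact ⟨Opposite.op a, ⟨(S I a).p⟩⟩
  · intro d c s s'
    obtain ⟨n⟩ := c
    obtain ⟨a, rfl⟩ := o_surj I d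
    obtain ⟨r, hr⟩ := e_surj (obj I n) (o I a) (s, s')
    obtain ⟨m, hnm, h1, h2, h3⟩ : ∃ m, n ≤ m ∧ m.unpair.1 = n ∧
        m.unpair.2.unpair.1 = a ∧ m.unpair.2.unpair.2 = r :=
      ⟨Nat.pair n (Nat.pair a r), Nat.left_le_pair _ _,
        by simp [Nat.unpair_pair], by simp [Nat.unpair_pair], by simp [Nat.unpair_pair]⟩
    subst h1 h2 h3
    have hinv := inv (I := I) m m.unpair.1 hnm
    have key : ∀ (u v : ((S I m).h m.unpair.1).1 ⟶ o I m.unpair.2.unpair.1),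
        e ((S I m).h m.unpair.1).1 (o I m.unpair.2.unpair.1) m.unpair.2.unpair.2 = some (u, v) →
        stepQ m (S I m) ≫ ((S I m).h m.unpair.1).2 ≫ u
          = stepQ m (S I m) ≫ ((S I m).h m.unpair.1).2 ≫ v :=
      fun u v he => stepQ_cond m (S I m) u v he
    rw [hinv] at key
    have hkey := key s s' hr
    refine ⟨Opposite.op (m + 1), (homOfLE (hnm.trans (Nat.le_add_right m 1))).op, ?_⟩
    rw [F_map_step hnm]
    erw [Category.assoc (f I m) _ s, Category.assoc (f I m) _ s']
    rw [← f_eq] at hkey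
    simp at hkey
    exact hkey
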